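/- Let M be the double star block matrix with xᵀy = 0 = zᵀw and a, b ≠ 0. Then M² = [[ab, 0, 0, a zᵀ],[0, y xᵀ, a y, 0],[0, b xᵀ, ab, 0],[b w, 0, 0, w zᵀ]], and (M²)* M² is permutation similar to the block diagonal matrix diag(r·A, h·B), where r = aā + w*w, h = bb̄ + y*y, A = [[bb̄, b̄zᵀ],[bz̄, z̄zᵀ]] and B = [[aā, āxᵀ],[ax̄, x̄xᵀ]]. -/

import Mathlib

open Matrix BigOperators

noncomputable section

abbrev Idx (m n : ℕ) := (Unit ⊕ Fin m) ⊕ (Unit ⊕ Fin n)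

/-- 4×4 block builder for matrices indexed by a double star digraph vertex set:
the blocks correspond to the first center, the first star's leaves, the second
center and the second star's leaves, in this order. -/
def blk {m n : ℕ}
    (A11 : ℂ) (A12 : Fin m → ℂ) (A13 : ℂ) (A14 : Fin n → ℂ)
    (A21 : Fin m → ℂ) (A22 : Fin m → Fin m → ℂ) (A23 : Fin m → ℂ) (A24 : Fin m → Fin n → ℂ)
    (A31 : ℂ) (A32 : Fin m → ℂ) (A33 : ℂ) (A34 : Fin n → ℂ)
    (A41 : Fin n → ℂ) (A42 : Fin n → Fin m → ℂ) (A43 : Fin n → ℂ) (A44 : Fin n → Fin n → ℂ) :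
    Matrix (Idx m n) (Idx m n) ℂ :=
  Matrix.of fun i j =>
    match i, j with
    | .inl (.inl _), .inl (.inl _) => A11
    | .inl (.inl _), .inl (.inr k) => A12 k
    | .inl (.inl _), .inr (.inl _) => A13
    | .inl (.inl _), .inr (.inr k) => A14 k
    | .inl (.inr i'), .inl (.inl _) => A21 i'
    | .inl (.inr i'), .inl (.inr k) => A22 i' k
    | .inl (.inr i'), .inr (.inl _) => A23 i'
    | .inl (.inr i'), .inr (.inr k) => A24 i' k
    | .inr (.inl _), .inl (.inl _) => A31
    | .inr (.inl _), .inl (.inr k) => A32 k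
    | .inr (.inl _), .inr (.inl _) => A33
    | .inr (.inl _), .inr (.inr k) => A34 k
    | .inr (.inr i'), .inl (.inl _) => A41 i'
    | .inr (.inr i'), .inl (.inr k) => A42 i' k
    | .inr (.inr i'), .inr (.inl _) => A43 i'
    | .inr (.inr i'), .inr (.inr k) => A44 i' k

/-- The canonical matrix `[[0, xᵀ, a, 0],[y, 0, 0, 0],[b, 0, 0, zᵀ],[0, 0, w, 0]]`
associated with a double star digraph. -/
def dsM {m n : ℕ} (a b : ℂ) (x y : Fin m → ℂ) (z w : Fin n → ℂ) :
    Matrix (Idx m n) (Idx m n) ℂ :=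
  blk 0 x a (fun _ => 0)
      y (fun _ _ => 0) (fun _ => 0) (fun _ _ => 0)
      b (fun _ => 0) 0 z
      (fun _ => 0) (fun _ _ => 0) w (fun _ _ => 0)

/-- `xᵀy`. -/
def dotT {k : ℕ} (x y : Fin k → ℂ) : ℂ := ∑ i, x i * y i

/-- `x*x = ∑ conj xᵢ · xᵢ`. -/
def gram {k : ℕ} (x : Fin k → ℂ) : ℂ := ∑ i, star (x i) * x i

end

@[simp] lemma blk_apply_11 {m n : ℕ}
    (A11 : ℂ) (A12 : Fin m → ℂ) (A13 : ℂ) (A14 : Fin n → ℂ)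
    (A21 : Fin m → ℂ) (A22 : Fin m → Fin m → ℂ) (A23 : Fin m → ℂ) (A24 : Fin m → Fin n → ℂ)
    (A31 : ℂ) (A32 : Fin m → ℂ) (A33 : ℂ) (A34 : Fin n → ℂ)
    (A41 : Fin n → ℂ) (A42 : Fin n → Fin m → ℂ) (A43 : Fin n → ℂ) (A44 : Fin n → Fin n → ℂ) (u : Unit) (i : Fin n) (v : Unit) :
    blk A11 A12 A13 A14 A21 A22 A23 A24 A31 A32 A33 A34 A41 A42 A43 A44 (Sum.inl (Sum.inl u)) (Sum.inl (Sum.inl v)) = A11 := rfl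

@[simp] lemma blk_apply_12 {m n : ℕ}
    (A11 : ℂ) (A12 : Fin m → ℂ) (A13 : ℂ) (A14 : Fin n → ℂ)
    (A21 : Fin m → ℂ) (A22 : Fin m → Fin m → ℂ) (A23 : Fin m → ℂ) (A24 : Fin m → Fin n → ℂ)
    (A31 : ℂ) (A32 : Fin m → ℂ) (A33 : ℂ) (A34 : Fin n → ℂ)
    (A41 : Fin n → ℂ) (A42 : Fin n → Fin m → ℂ) (A43 : Fin n → ℂ) (A44 : Fin n → Fin n → ℂ) (u : Unit) (i : Fin n) (j : Fin m) :
    blk A11 A12 A13 A14 A21 A22 A23 A24 A31 A32 A33 A34 A41 A42 A43 A44 (Sum.inl (Sum.inl u)) (Sum.inl (Sum.inr j)) = A12 j := rfl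

@[simp] lemma blk_apply_13 {m n : ℕ}
    (A11 : ℂ) (A12 : Fin m → ℂ) (A13 : ℂ) (A14 : Fin n → ℂ)
    (A21 : Fin m → ℂ) (A22 : Fin m → Fin m → ℂ) (A23 : Fin m → ℂ) (A24 : Fin m → Fin n → ℂ)
    (A31 : ℂ) (A32 : Fin m → ℂ) (A33 : ℂ) (A34 : Fin n → ℂ)
    (A41 : Fin n → ℂ) (A42 : Fin n → Fin m → ℂ) (A43 : Fin n → ℂ) (A44 : Fin n → Fin n → ℂ) (u : Unit) (i : Fin n) (v : Unit) :
    blk A11 A12 A13 A14 A21 A22 A23 A24 A31 A32 A33 A34 A41 A42 A43 A44 (Sum.inl (Sum.inl u)) (Sum.inr (Sum.inl v)) = A13 := rfl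

@[simp] lemma blk_apply_14 {m n : ℕ}
    (A11 : ℂ) (A12 : Fin m → ℂ) (A13 : ℂ) (A14 : Fin n → ℂ)
    (A21 : Fin m → ℂ) (A22 : Fin m → Fin m → ℂ) (A23 : Fin m → ℂ) (A24 : Fin m → Fin n → ℂ)
    (A31 : ℂ) (A32 : Fin m → ℂ) (A33 : ℂ) (A34 : Fin n → ℂ)
    (A41 : Fin n → ℂ) (A42 : Fin n → Fin m → ℂ) (A43 : Fin n → ℂ) (A44 : Fin n → Fin n → ℂ) (u : Unit) (i : Fin n) (j : Fin n) :
    blk A11 A12 A13 A14 A21 A22 A23 A24 A31 A32 A33 A34 A41 A42 A43 A44 (Sum.inl (Sum.inl u)) (Sum.inr (Sum.inr j)) = A14 j := rfl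

@[simp] lemma blk_apply_21 {m n : ℕ}
    (A11 : ℂ) (A12 : Fin m → ℂ) (A13 : ℂ) (A14 : Fin n → ℂ)
    (A21 : Fin m → ℂ) (A22 : Fin m → Fin m → ℂ) (A23 : Fin m → ℂ) (A24 : Fin m → Fin n → ℂ)
    (A31 : ℂ) (A32 : Fin m → ℂ) (A33 : ℂ) (A34 : Fin n → ℂ)
    (A41 : Fin n → ℂ) (A42 : Fin n → Fin m → ℂ) (A43 : Fin n → ℂ) (A44 : Fin n → Fin n → ℂ) (u : Unit) (i : Fin m) (v : Unit) :
    blk A11 A12 A13 A14 A21 A22 A23 A24 A31 A32 A33 A34 A41 A42 A43 A44 (Sum.inl (Sum.inr i)) (Sum.inl (Sum.inl v)) = A21 i := rfl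

@[simp] lemma blk_apply_22 {m n : ℕ}
    (A11 : ℂ) (A12 : Fin m → ℂ) (A13 : ℂ) (A14 : Fin n → ℂ)
    (A21 : Fin m → ℂ) (A22 : Fin m → Fin m → ℂ) (A23 : Fin m → ℂ) (A24 : Fin m → Fin n → ℂ)
    (A31 : ℂ) (A32 : Fin m → ℂ) (A33 : ℂ) (A34 : Fin n → ℂ)
    (A41 : Fin n → ℂ) (A42 : Fin n → Fin m → ℂ) (A43 : Fin n → ℂ) (A44 : Fin n → Fin n → ℂ) (u : Unit) (i : Fin m) (j : Fin m) :
    blk A11 A12 A13 A14 A21 A22 A23 A24 A31 A32 A33 A34 A41 A42 A43 A44 (Sum.inl (Sum.inr i)) (Sum.inl (Sum.inr j)) = A22 i j := rfl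

@[simp] lemma blk_apply_23 {m n : ℕ}
    (A11 : ℂ) (A12 : Fin m → ℂ) (A13 : ℂ) (A14 : Fin n → ℂ)
    (A21 : Fin m → ℂ) (A22 : Fin m → Fin m → ℂ) (A23 : Fin m → ℂ) (A24 : Fin m → Fin n → ℂ)
    (A31 : ℂ) (A32 : Fin m → ℂ) (A33 : ℂ) (A34 : Fin n → ℂ)
    (A41 : Fin n → ℂ) (A42 : Fin n → Fin m → ℂ) (A43 : Fin n → ℂ) (A44 : Fin n → Fin n → ℂ) (u : Unit) (i : Fin m) (v : Unit) :
    blk A11 A12 A13 A14 A21 A22 A23 A24 A31 A32 A33 A34 A41 A42 A43 A44 (Sum.inl (Sum.inr i)) (Sum.inr (Sum.inl v)) = A23 i := rfl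

@[simp] lemma blk_apply_24 {m n : ℕ}
    (A11 : ℂ) (A12 : Fin m → ℂ) (A13 : ℂ) (A14 : Fin n → ℂ)
    (A21 : Fin m → ℂ) (A22 : Fin m → Fin m → ℂ) (A23 : Fin m → ℂ) (A24 : Fin m → Fin n → ℂ)
    (A31 : ℂ) (A32 : Fin m → ℂ) (A33 : ℂ) (A34 : Fin n → ℂ)
    (A41 : Fin n → ℂ) (A42 : Fin n → Fin m → ℂ) (A43 : Fin n → ℂ) (A44 : Fin n → Fin n → ℂ) (u : Unit) (i : Fin m) (j : Fin n) :
    blk A11 A12 A13 A14 A21 A22 A23 A24 A31 A32 A33 A34 A41 A42 A43 A44 (Sum.inl (Sum.inr i)) (Sum.inr (Sum.inr j)) = A24 i j := rfl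

@[simp] lemma blk_apply_31 {m n : ℕ}
    (A11 : ℂ) (A12 : Fin m → ℂ) (A13 : ℂ) (A14 : Fin n → ℂ)
    (A21 : Fin m → ℂ) (A22 : Fin m → Fin m → ℂ) (A23 : Fin m → ℂ) (A24 : Fin m → Fin n → ℂ)
    (A31 : ℂ) (A32 : Fin m → ℂ) (A33 : ℂ) (A34 : Fin n → ℂ)
    (A41 : Fin n → ℂ) (A42 : Fin n → Fin m → ℂ) (A43 : Fin n → ℂ) (A44 : Fin n → Fin n → ℂ) (u : Unit) (i : Fin n) (v : Unit) :
    blk A11 A12 A13 A14 A21 A22 A23 A24 A31 A32 A33 A34 A41 A42 A43 A44 (Sum.inr (Sum.inl u)) (Sum.inl (Sum.inl v)) = A31 := rfl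

@[simp] lemma blk_apply_32 {m n : ℕ}
    (A11 : ℂ) (A12 : Fin m → ℂ) (A13 : ℂ) (A14 : Fin n → ℂ)
    (A21 : Fin m → ℂ) (A22 : Fin m → Fin m → ℂ) (A23 : Fin m → ℂ) (A24 : Fin m → Fin n → ℂ)
    (A31 : ℂ) (A32 : Fin m → ℂ) (A33 : ℂ) (A34 : Fin n → ℂ)
    (A41 : Fin n → ℂ) (A42 : Fin n → Fin m → ℂ) (A43 : Fin n → ℂ) (A44 : Fin n → Fin n → ℂ) (u : Unit) (i : Fin n) (j : Fin m) :
    blk A11 A12 A13 A14 A21 A22 A23 A24 A31 A32 A33 A34 A41 A42 A43 A44 (Sum.inr (Sum.inl u)) (Sum.inl (Sum.inr j)) = A32 j := rfl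

@[simp] lemma blk_apply_33 {m n : ℕ}
    (A11 : ℂ) (A12 : Fin m → ℂ) (A13 : ℂ) (A14 : Fin n → ℂ)
    (A21 : Fin m → ℂ) (A22 : Fin m → Fin m → ℂ) (A23 : Fin m → ℂ) (A24 : Fin m → Fin n → ℂ)
    (A31 : ℂ) (A32 : Fin m → ℂ) (A33 : ℂ) (A34 : Fin n → ℂ)
    (A41 : Fin n → ℂ) (A42 : Fin n → Fin m → ℂ) (A43 : Fin n → ℂ) (A44 : Fin n → Fin n → ℂ) (u : Unit) (i : Fin n) (v : Unit) :
    blk A11 A12 A13 A14 A21 A22 A23 A24 A31 A32 A33 A34 A41 A42 A43 A44 (Sum.inr (Sum.inl u)) (Sum.inr (Sum.inl v)) = A33 := rfl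

@[simp] lemma blk_apply_34 {m n : ℕ}
    (A11 : ℂ) (A12 : Fin m → ℂ) (A13 : ℂ) (A14 : Fin n → ℂ)
    (A21 : Fin m → ℂ) (A22 : Fin m → Fin m → ℂ) (A23 : Fin m → ℂ) (A24 : Fin m → Fin n → ℂ)
    (A31 : ℂ) (A32 : Fin m → ℂ) (A33 : ℂ) (A34 : Fin n → ℂ)
    (A41 : Fin n → ℂ) (A42 : Fin n → Fin m → ℂ) (A43 : Fin n → ℂ) (A44 : Fin n → Fin n → ℂ) (u : Unit) (i : Fin n) (j : Fin n) :
    blk A11 A12 A13 A14 A21 A22 A23 A24 A31 A32 A33 A34 A41 A42 A43 A44 (Sum.inr (Sum.inl u)) (Sum.inr (Sum.inr j)) = A34 j := rfl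

@[simp] lemma blk_apply_41 {m n : ℕ}
    (A11 : ℂ) (A12 : Fin m → ℂ) (A13 : ℂ) (A14 : Fin n → ℂ)
    (A21 : Fin m → ℂ) (A22 : Fin m → Fin m → ℂ) (A23 : Fin m → ℂ) (A24 : Fin m → Fin n → ℂ)
    (A31 : ℂ) (A32 : Fin m → ℂ) (A33 : ℂ) (A34 : Fin n → ℂ)
    (A41 : Fin n → ℂ) (A42 : Fin n → Fin m → ℂ) (A43 : Fin n → ℂ) (A44 : Fin n → Fin n → ℂ) (u : Unit) (i : Fin n) (v : Unit) :
    blk A11 A12 A13 A14 A21 A22 A23 A24 A31 A32 A33 A34 A41 A42 A43 A44 (Sum.inr (Sum.inr i)) (Sum.inl (Sum.inl v)) = A41 i := rfl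

@[simp] lemma blk_apply_42 {m n : ℕ}
    (A11 : ℂ) (A12 : Fin m → ℂ) (A13 : ℂ) (A14 : Fin n → ℂ)
    (A21 : Fin m → ℂ) (A22 : Fin m → Fin m → ℂ) (A23 : Fin m → ℂ) (A24 : Fin m → Fin n → ℂ)
    (A31 : ℂ) (A32 : Fin m → ℂ) (A33 : ℂ) (A34 : Fin n → ℂ)
    (A41 : Fin n → ℂ) (A42 : Fin n → Fin m → ℂ) (A43 : Fin n → ℂ) (A44 : Fin n → Fin n → ℂ) (u : Unit) (i : Fin n) (j : Fin m) :
    blk A11 A12 A13 A14 A21 A22 A23 A24 A31 A32 A33 A34 A41 A42 A43 A44 (Sum.inr (Sum.inr i)) (Sum.inl (Sum.inr j)) = A42 i j := rfl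

@[simp] lemma blk_apply_43 {m n : ℕ}
    (A11 : ℂ) (A12 : Fin m → ℂ) (A13 : ℂ) (A14 : Fin n → ℂ)
    (A21 : Fin m → ℂ) (A22 : Fin m → Fin m → ℂ) (A23 : Fin m → ℂ) (A24 : Fin m → Fin n → ℂ)
    (A31 : ℂ) (A32 : Fin m → ℂ) (A33 : ℂ) (A34 : Fin n → ℂ)
    (A41 : Fin n → ℂ) (A42 : Fin n → Fin m → ℂ) (A43 : Fin n → ℂ) (A44 : Fin n → Fin n → ℂ) (u : Unit) (i : Fin n) (v : Unit) :
    blk A11 A12 A13 A14 A21 A22 A23 A24 A31 A32 A33 A34 A41 A42 A43 A44 (Sum.inr (Sum.inr i)) (Sum.inr (Sum.inl v)) = A43 i := rfl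

@[simp] lemma blk_apply_44 {m n : ℕ}
    (A11 : ℂ) (A12 : Fin m → ℂ) (A13 : ℂ) (A14 : Fin n → ℂ)
    (A21 : Fin m → ℂ) (A22 : Fin m → Fin m → ℂ) (A23 : Fin m → ℂ) (A24 : Fin m → Fin n → ℂ)
    (A31 : ℂ) (A32 : Fin m → ℂ) (A33 : ℂ) (A34 : Fin n → ℂ)
    (A41 : Fin n → ℂ) (A42 : Fin n → Fin m → ℂ) (A43 : Fin n → ℂ) (A44 : Fin n → Fin n → ℂ) (u : Unit) (i : Fin n) (j : Fin n) :
    blk A11 A12 A13 A14 A21 A22 A23 A24 A31 A32 A33 A34 A41 A42 A43 A44 (Sum.inr (Sum.inr i)) (Sum.inr (Sum.inr j)) = A44 i j := rfl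

theorem dsM_sq_gram_perm_similar {m n : ℕ} (a b : ℂ) (ha : a ≠ 0) (hb : b ≠ 0)
    (x y : Fin m → ℂ) (z w : Fin n → ℂ)
    (hxy : dotT x y = 0) (hzw : dotT z w = 0) :
    letI M := dsM a b x y z w
    letI r := a * star a + gram w
    letI h := b * star b + gram y
    letI A : Matrix (Unit ⊕ Fin n) (Unit ⊕ Fin n) ℂ :=
      Matrix.fromBlocks (Matrix.of fun _ _ => b * star b)
        (Matrix.of fun _ j => star b * z j)
        (Matrix.of fun i _ => b * star (z i))
        (Matrix.of fun i j => star (z i) * z j)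
    letI B : Matrix (Unit ⊕ Fin m) (Unit ⊕ Fin m) ℂ :=
      Matrix.fromBlocks (Matrix.of fun _ _ => a * star a)
        (Matrix.of fun _ j => star a * x j)
        (Matrix.of fun i _ => a * star (x i))
        (Matrix.of fun i j => star (x i) * x j)
    M ^ 2 = blk (a * b) (fun _ => 0) 0 (fun j => a * z j)
        (fun _ => 0) (fun i j => y i * x j) (fun i => a * y i) (fun _ _ => 0)
        0 (fun j => b * x j) (a * b) (fun _ => 0)
        (fun i => b * w i) (fun _ _ => 0) (fun _ => 0) (fun i j => w i * z j) ∧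
    ∃ e : Idx m n ≃ (Unit ⊕ Fin n) ⊕ (Unit ⊕ Fin m),
      ((M ^ 2)ᴴ * M ^ 2).submatrix e.symm e.symm =
        Matrix.fromBlocks (r • A) 0 0 (h • B) := by
  have hxy' : ∑ i, x i * y i = 0 := hxy
  have hzw' : ∑ i, z i * w i = 0 := hzw
  have h1 : dsM a b x y z w ^ 2 = blk (a * b) (fun _ => 0) 0 (fun j => a * z j)
        (fun _ => 0) (fun i j => y i * x j) (fun i => a * y i) (fun _ _ => 0)
        0 (fun j => b * x j) (a * b) (fun _ => 0)
        (fun i => b * w i) (fun _ _ => 0) (fun _ => 0) (fun i j => w i * z j) := by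
    rw [pow_two]
    ext i j
    rcases i with (u|i)|(u|i) <;> rcases j with (v|j)|(v|j) <;>
      simp [dsM, mul_apply, Fintype.sum_sum_type, hxy', hzw', mul_comm]
  refine ⟨h1, ⟨⟨fun i => match i with
      | .inl (.inl u) => .inl (.inl u)
      | .inl (.inr i) => .inr (.inr i)
      | .inr (.inl u) => .inr (.inl u)
      | .inr (.inr i) => .inl (.inr i),
      fun i => match i with
      | .inl (.inl u) => .inl (.inl u)
      | .inl (.inr i) => .inr (.inr i)
      | .inr (.inl u) => .inr (.inl u)
      | .inr (.inr i) => .inl (.inr i),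
      by rintro ((u|i)|(u|i)) <;> rfl,
      by rintro ((u|i)|(u|i)) <;> rfl⟩, ?_⟩⟩
  rw [h1]
  ext p q
  rcases p with (u|i)|(u|i) <;> rcases q with (v|j)|(v|j) <;>
    simp [mul_apply, conjTranspose_apply, Fintype.sum_sum_type, Matrix.submatrix_apply,
      Equiv.coe_fn_symm_mk, _root_.gram, Finset.mul_sum, Finset.sum_mul, Matrix.smul_apply,
      star_mul', smul_eq_mul] <;> ring_nf <;> simp [Finset.mul_sum, mul_assoc] <;> exact Finset.sum_congr rfl fun _ _ => by ring
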